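/- Suppose J(r) = (1/L) V(|r|/L) for a real L > 0 and a function V : [0,∞) → ℝ that is Lipschitz continuous with Lipschitz constant ℓ. Then for all coarse cells k, l (including k = l) and all x ∈ C_k, y ∈ C_l with x ≠ y, the deviation of the coupling from its cell average satisfies |J(x−y) − J̄(k,l)| ≤ 2Qℓ/L². -/

import Mathlib

open Finset

/-- The coarse cell `C_k = {kQ, …, (k+1)Q - 1}` inside the lattice `Fin (M*Q)`. -/
def cell (M Q : ℕ) (k : Fin M) : Finset (Fin (M * Q)) :=
  univ.filter (fun x => x.val / Q = k.val)

/-- Cell-averaged couplings `J̄(k,l)`. -/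
noncomputable def Jbar (M Q : ℕ) (J : ℤ → ℝ) (k l : Fin M) : ℝ :=
  if k = l then
    (∑ x ∈ cell M Q k, ∑ y ∈ (cell M Q k).filter (fun y => y ≠ x),
        J ((x.val : ℤ) - (y.val : ℤ))) / ((Q : ℝ) * ((Q : ℝ) - 1))
  else
    (∑ x ∈ cell M Q k, ∑ y ∈ cell M Q l, J ((x.val : ℤ) - (y.val : ℤ))) / ((Q : ℝ) ^ 2)

lemma cell_bounds {M Q : ℕ} (hQ : 0 < Q) {k : Fin M} {x : Fin (M * Q)}
    (hx : x ∈ cell M Q k) : k.val * Q ≤ x.val ∧ x.val < k.val * Q + Q := by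
  simp only [cell, mem_filter, mem_univ, true_and] at hx
  constructor
  · calc k.val * Q = (x.val / Q) * Q := by rw [hx]
      _ ≤ x.val := Nat.div_mul_le_self _ _
  · have h1 : x.val / Q < k.val + 1 := by omega
    have := (Nat.div_lt_iff_lt_mul hQ).mp h1
    nlinarith

lemma card_cell (M Q : ℕ) (hQ : 0 < Q) (k : Fin M) : (cell M Q k).card = Q := by
  have h : (cell M Q k).card = (univ : Finset (Fin Q)).card := by
    apply Finset.card_nbij' (i := fun x => (⟨x.val % Q, Nat.mod_lt _ hQ⟩ : Fin Q))
      (j := fun i => (⟨k.val * Q + i.val, by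
        have hk : k.val + 1 ≤ M := k.isLt
        have hi : i.val < Q := i.isLt
        calc k.val * Q + i.val < (k.val + 1) * Q := by nlinarith
          _ ≤ M * Q := Nat.mul_le_mul_right _ hk⟩ : Fin (M * Q)))
    · intro a _; exact mem_univ _
    · intro i _
      simp only [cell, mem_coe, mem_filter, mem_univ, true_and]
      rw [mul_comm k.val Q, Nat.mul_add_div hQ, Nat.div_eq_of_lt i.isLt, add_zero]
    · intro a ha
      simp only [cell, mem_coe, mem_filter, mem_univ, true_and] at ha
      apply Fin.ext
      simp only
      conv_rhs => rw [← Nat.div_add_mod a.val Q]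
      rw [ha]
      ring
    · intro i _
      apply Fin.ext
      simp only
      rw [add_comm, Nat.add_mul_mod_self_right, Nat.mod_eq_of_lt i.isLt]
  rw [h, Finset.card_univ, Fintype.card_fin]

lemma avg_bound {α : Type*} (s : Finset α) (f : α → ℝ) (a B n : ℝ)
    (hn : 0 < n) (hcard : (s.card : ℝ) = n) (h : ∀ p ∈ s, |a - f p| ≤ B) :
    |a - (∑ p ∈ s, f p) / n| ≤ B := by
  have hrw : a - (∑ p ∈ s, f p) / n = (∑ p ∈ s, (a - f p)) / n := by
    rw [Finset.sum_sub_distrib, Finset.sum_const, nsmul_eq_mul, hcard]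
    field_simp
  rw [hrw, abs_div, abs_of_pos hn, div_le_iff₀ hn]
  calc |∑ p ∈ s, (a - f p)| ≤ ∑ p ∈ s, |a - f p| := Finset.abs_sum_le_sum_abs _ _
    _ ≤ ∑ p ∈ s, B := Finset.sum_le_sum h
    _ = n * B := by rw [Finset.sum_const, nsmul_eq_mul, hcard]
    _ = B * n := mul_comm _ _

/-- for `J(r) = L⁻¹ V(|r|/L)` with `V` Lipschitz with constant `ℓ`, the
deviation of the coupling from its cell average is bounded by `2Qℓ/L²`. -/
theorem statement6 (M Q : ℕ) (hM : 1 ≤ M) (hQ : 2 ≤ Q)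
    (L l : ℝ) (hL : 0 < L) (hl : 0 ≤ l)
    (V : ℝ → ℝ) (hV : ∀ a b : ℝ, 0 ≤ a → 0 ≤ b → |V a - V b| ≤ l * |a - b|)
    (J : ℤ → ℝ) (hJ : ∀ r : ℤ, J r = (1 / L) * V (|(r : ℝ)| / L)) :
    ∀ k l' : Fin M, ∀ x ∈ cell M Q k, ∀ y ∈ cell M Q l', x ≠ y →
      |J ((x.val : ℤ) - (y.val : ℤ)) - Jbar M Q J k l'| ≤ 2 * Q * l / L ^ 2 := by
  have hQ0 : 0 < Q := by omega
  -- Pointwise Lipschitz bound on J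
  have point : ∀ r r' : ℤ, |r - r'| ≤ 2 * (Q : ℤ) →
      |J r - J r'| ≤ 2 * Q * l / L ^ 2 := by
    intro r r' h2Q
    have h2QR : |(r : ℝ) - (r' : ℝ)| ≤ 2 * Q := by exact_mod_cast h2Q
    rw [hJ r, hJ r', ← mul_sub, abs_mul, abs_of_pos (by positivity : (0:ℝ) < 1 / L)]
    have ha : (0:ℝ) ≤ |(r : ℝ)| / L := by positivity
    have hb : (0:ℝ) ≤ |(r' : ℝ)| / L := by positivity
    have h1 := hV _ _ ha hb
    have habs : |(|(r : ℝ)| / L - |(r' : ℝ)| / L)| ≤ 2 * Q / L := by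
      rw [div_sub_div_same, abs_div, abs_of_pos hL, div_le_div_iff_of_pos_right hL]
      exact le_trans (abs_abs_sub_abs_le_abs_sub _ _) h2QR
    calc (1 / L) * |V (|(r : ℝ)| / L) - V (|(r' : ℝ)| / L)|
        ≤ (1 / L) * (l * (2 * Q / L)) := by
          refine mul_le_mul_of_nonneg_left ?_ (by positivity)
          exact le_trans h1 (mul_le_mul_of_nonneg_left habs hl)
      _ = 2 * Q * l / L ^ 2 := by field_simp
  intro k l' x hx y hy hxy
  obtain ⟨hx1, hx2⟩ := cell_bounds hQ0 hx
  obtain ⟨hy1, hy2⟩ := cell_bounds hQ0 hy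
  by_cases hkl : k = l'
  · subst hkl
    rw [Jbar, if_pos rfl]
    have hsum : (∑ a ∈ cell M Q k, ∑ b ∈ (cell M Q k).filter (fun y => y ≠ a),
          J ((a.val : ℤ) - (b.val : ℤ)))
        = ∑ p ∈ (cell M Q k).offDiag, J ((p.1.val : ℤ) - (p.2.val : ℤ)) := by
      rw [Finset.sum_sigma']
      apply Finset.sum_nbij' (i := fun p => (p.1, p.2)) (j := fun p => ⟨p.1, p.2⟩)
      · rintro ⟨a, b⟩ hab
        simp only [Finset.mem_sigma, Finset.mem_filter] at hab
        simp only [Finset.mem_offDiag]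
        exact ⟨hab.1, hab.2.1, Ne.symm hab.2.2⟩
      · rintro ⟨a, b⟩ hab
        simp only [Finset.mem_offDiag] at hab
        simp only [Finset.mem_sigma, Finset.mem_filter]
        exact ⟨hab.1, hab.2.1, fun h => hab.2.2 h.symm⟩
      · rintro ⟨a, b⟩ _; rfl
      · rintro ⟨a, b⟩ _; rfl
      · rintro ⟨a, b⟩ _; rfl
    rw [hsum]
    apply avg_bound
    · have : (2:ℝ) ≤ Q := by exact_mod_cast hQ
      nlinarith
    · rw [Finset.offDiag_card, card_cell M Q hQ0 k]
      rw [Nat.cast_sub (Nat.le_mul_of_pos_left Q hQ0), Nat.cast_mul]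
      ring
    · rintro ⟨a, b⟩ hab
      rw [Finset.mem_offDiag] at hab
      obtain ⟨ha1, ha2⟩ := cell_bounds hQ0 hab.1
      obtain ⟨hb1, hb2⟩ := cell_bounds hQ0 hab.2.1
      apply point
      rw [abs_le]
      omega
  · rw [Jbar, if_neg hkl]
    rw [← Finset.sum_product']
    apply avg_bound
    · positivity
    · rw [Finset.card_product, card_cell M Q hQ0 k, card_cell M Q hQ0 l']
      push_cast; ring
    · rintro ⟨a, b⟩ hab
      rw [Finset.mem_product] at hab
      obtain ⟨ha1, ha2⟩ := cell_bounds hQ0 hab.1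
      obtain ⟨hb1, hb2⟩ := cell_bounds hQ0 hab.2
      apply point
      rw [abs_le]
      omega
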